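/- arXiv:2306.02527 — 3 statements merged into one kernel-verified Lean document; each statement's English description precedes it below -/
import Mathlib

section
/- Suppose f is convex and 1/κ*-strongly convex in the norm induced by P*^{-1} (so that κ*·(1/2)‖∇f(x)‖²_{P*} ≥ f(x) - f(x*)). If an iterate update x_{t+1} = x_t - P_t ∇f(x_t) satisfies the Armijo condition f(x_{t+1}) ≤ f(x_t) - (1/2)‖∇f(x_t)‖²_{P_t}, and ‖∇f(x_t)‖²_{P_t} ≥ γ ‖∇f(x_t)‖²_{P*}, then f(x_{t+1}) - f(x*) ≤ (1 - γ/κ*)(f(x_t) - f(x*)). -/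
open Matrix

/-- One-step progress guarantee of multidimensional backtracking:
an accepted Armijo step with a `γ`-competitive preconditioner contracts the
optimality gap by `(1 - γ/κ*)`. -/
theorem progress_competitive_preconditioner {d : ℕ} (f : (Fin d → ℝ) → ℝ)
    (hconv : ConvexOn ℝ Set.univ f)
    (xstar xt xt1 : Fin d → ℝ) (hmin : ∀ y, f xstar ≤ f y)
    (Pstar Pt : Matrix (Fin d) (Fin d) ℝ)
    (hPstar : Pstar.PosSemidef) (hPt : Pt.PosSemidef)
    (g : Fin d → ℝ) (κ γ : ℝ) (hκ : 1 ≤ κ) (hγ : 0 < γ) (hγ1 : γ ≤ 1)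
    -- `f` is `1/κ*`-strongly convex in the norm induced by `Pstar⁻¹`, giving the PL-type bound
    (hPL : f xt - f xstar ≤ κ * (1 / 2 * (g ⬝ᵥ Pstar *ᵥ g)))
    -- the update with gradient `g = ∇f(x_t)`
    (hupdate : xt1 = xt - Pt *ᵥ g)
    -- Armijo condition
    (hArmijo : f xt1 ≤ f xt - 1 / 2 * (g ⬝ᵥ Pt *ᵥ g))
    -- `γ`-competitiveness
    (hcomp : γ * (g ⬝ᵥ Pstar *ᵥ g) ≤ g ⬝ᵥ Pt *ᵥ g) :
    f xt1 - f xstar ≤ (1 - γ / κ) * (f xt - f xstar) := by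
  have h0 : 0 ≤ f xt - f xstar := by linarith [hmin xt]
  have hκ0 : (0:ℝ) < κ := by linarith
  have hPs : 0 ≤ g ⬝ᵥ Pstar *ᵥ g := by simpa using hPstar.dotProduct_mulVec_nonneg g
  have key : γ / κ * (f xt - f xstar) ≤ 1 / 2 * (g ⬝ᵥ Pt *ᵥ g) := by
    rw [div_mul_eq_mul_div, div_le_iff₀ hκ0]
    nlinarith
  nlinarith
end

section
/- Let b ∈ ℝ^d_{>0} and u ∈ ℝ^d_{≥0} with ⟨u, (1/(2d))b⟩ > 1. Define b⁺[i] = min(b[i], 1/u[i]). Then ∏_i b⁺[i] ≤ (1/(d+1)) ∏_i b[i], i.e., the minimum-volume enclosing box shrinks the volume by a factor of at least d+1. -/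
lemma aux_one_add_sum_le_prod {ι : Type*} (s : Finset ι) (f : ι → ℝ)
    (hf : ∀ i ∈ s, 0 ≤ f i) : 1 + ∑ i ∈ s, f i ≤ ∏ i ∈ s, (1 + f i) := by
  classical
  induction s using Finset.induction_on with
  | empty => simp
  | @insert a s ha ih =>
    rw [Finset.sum_insert ha, Finset.prod_insert ha]
    have hfa := hf a (Finset.mem_insert_self a s)
    have h1 : 1 + ∑ i ∈ s, f i ≤ ∏ i ∈ s, (1 + f i) :=
      ih (fun i hi => hf i (Finset.mem_insert_of_mem hi))
    have hs : 0 ≤ ∑ i ∈ s, f i :=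
      Finset.sum_nonneg fun i hi => hf i (Finset.mem_insert_of_mem hi)
    nlinarith [mul_le_mul_of_nonneg_left h1 (by linarith : (0:ℝ) ≤ 1 + f a)]

/-- Volume shrinkage for the box variant: if the half-space cuts off the
backtracked point `(1/(2d))·b`, the minimum-volume enclosing box shrinks the volume
by a factor at least `d+1`. (`1/u[i] = +∞` when `u[i] = 0`.) -/
theorem box_volume_shrinkage {d : ℕ} (hd : 0 < d) (b u : Fin d → ℝ)
    (hb : ∀ i, 0 < b i) (hu : ∀ i, 0 ≤ u i)
    (hcut : 1 < ∑ i, u i * (b i / (2 * (d : ℝ))))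
    (bplus : Fin d → ℝ)
    (hbplus : ∀ i, bplus i = if u i = 0 then b i else min (b i) (1 / u i)) :
    ∏ i, bplus i ≤ (1 / ((d : ℝ) + 1)) * ∏ i, b i := by
  set m : Fin d → ℝ := fun i => max 1 (u i * b i) with hm
  have hm1 : ∀ i, 1 ≤ m i := fun i => le_max_left _ _
  have hdpos : (0:ℝ) < d := by exact_mod_cast hd
  have hbp : ∀ i, bplus i = b i / m i := by
    intro i
    rw [hbplus i]
    by_cases h : u i = 0
    · simp [h, hm]
    · have hui : 0 < u i := (hu i).lt_of_ne (Ne.symm h)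
      rcases le_or_gt (u i * b i) 1 with hle | hlt
      · have hbi : b i ≤ 1 / u i := by
          rw [le_div_iff₀ hui]; linarith [mul_comm (u i) (b i)]
        rw [if_neg h, min_eq_left hbi]
        simp [hm, max_eq_left hle]
      · have hbi : 1 / u i ≤ b i := by
          rw [div_le_iff₀ hui]; nlinarith
        rw [if_neg h, min_eq_right hbi]
        simp only [hm, max_eq_right hlt.le]
        field_simp
        exact (div_self (hb i).ne').symm
  -- sum bound
  have hsum : (2 * d : ℝ) < ∑ i, u i * b i := by
    have h2d : (0:ℝ) < 2 * d := by positivity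
    have : ∑ i, u i * (b i / (2 * (d : ℝ))) = (∑ i, u i * b i) / (2 * d) := by
      rw [Finset.sum_div]; congr 1; ext i; ring
    rw [this, lt_div_iff₀ h2d, one_mul] at hcut
    linarith
  have hprod : (d:ℝ) + 1 < ∏ i, m i := by
    have key := aux_one_add_sum_le_prod Finset.univ (fun i => m i - 1)
      (fun i _ => sub_nonneg.mpr (hm1 i))
    have heq : ∏ i, (1 + (m i - 1)) = ∏ i, m i := by
      congr 1; ext i; ring
    rw [heq] at key
    have hms : ∑ i, u i * b i - d ≤ ∑ i, (m i - 1) := by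
      have : ∑ i, (m i - 1) = (∑ i, m i) - d := by
        rw [Finset.sum_sub_distrib]
        simp [Finset.card_univ]
      rw [this]
      have : ∑ i, u i * b i ≤ ∑ i, m i :=
        Finset.sum_le_sum fun i _ => le_max_right _ _
      linarith
    linarith
  have hmpos : (0:ℝ) < ∏ i, m i := by positivity
  have hbprod : (0:ℝ) < ∏ i, b i := Finset.prod_pos fun i _ => hb i
  calc ∏ i, bplus i = ∏ i, (b i / m i) := by
        apply Finset.prod_congr rfl; intro i _; exact hbp i
    _ = (∏ i, b i) / (∏ i, m i) := Finset.prod_div_distrib _ _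
    _ ≤ (∏ i, b i) / ((d:ℝ) + 1) := by
        apply div_le_div_of_nonneg_left hbprod.le (by positivity) hprod.le
    _ = (1 / ((d : ℝ) + 1)) * ∏ i, b i := by ring
end

section
/- Let X ⊆ ℝ^d be an axis-aligned convex set (closed under coordinate sign flips) and A a positive definite matrix with X ⊆ E(A) = {x : ⟨x, Ax⟩ ≤ 1}. Then X ⊆ E(Diag(diag(A))) and Vol(E(Diag(diag(A)))) ≤ Vol(E(A)). -/
open Matrix

section AuxAxisAligned

open MeasureTheory

section X
open scoped MatrixOrder
noncomputable def Matrix.PosSemidef.sqrt {n : Type*} [Fintype n] [DecidableEq n] {A : Matrix n n ℝ}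
    (_hA : A.PosSemidef) : Matrix n n ℝ := CFC.sqrt A
lemma Matrix.PosSemidef.sqrt_mul_self {n : Type*} [Fintype n] [DecidableEq n] {A : Matrix n n ℝ}
    (hA : A.PosSemidef) : hA.sqrt * hA.sqrt = A :=
  CFC.sqrt_mul_sqrt_self A hA.nonneg
lemma Matrix.PosSemidef.posSemidef_sqrt {n : Type*} [Fintype n] [DecidableEq n] {A : Matrix n n ℝ}
    (hA : A.PosSemidef) : hA.sqrt.PosSemidef :=
  (CFC.sqrt_nonneg A).posSemidef
end X

lemma diag_pos' {n : Type*} [Fintype n] [DecidableEq n] {A : Matrix n n ℝ}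
    (hA : A.PosDef) (i : n) : 0 < A i i := by
  have h := hA.dotProduct_mulVec_pos (x := Pi.single i 1) (by
    intro h
    have := congrFun h i
    simp at this)
  simpa [dotProduct, Matrix.mulVec_single, Pi.single_apply] using h

lemma trace_eq_sum_eig {n : Type*} [Fintype n] [DecidableEq n] {B : Matrix n n ℝ}
    (hB : B.IsHermitian) : B.trace = ∑ i, hB.eigenvalues i := by
  simpa using hB.trace_eq_sum_eigenvalues

lemma hadamard {d : ℕ} {A : Matrix (Fin d) (Fin d) ℝ} (hA : A.PosDef) :
    A.det ≤ ∏ i, A i i := by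
  rcases Nat.eq_zero_or_pos d with hd | hd
  · subst hd; simp [Matrix.det_fin_zero]
  set c : Fin d → ℝ := fun i => (Real.sqrt (A i i))⁻¹ with hc
  have hApos : ∀ i, 0 < A i i := diag_pos' hA
  have hcpos : ∀ i, 0 < c i := fun i =>
    inv_pos.mpr (Real.sqrt_pos.mpr (hApos i))
  set C : Matrix (Fin d) (Fin d) ℝ := Matrix.diagonal c with hC
  have hCherm : Cᴴ = C := by
    simp [hC, Matrix.diagonal_conjTranspose]
  set B : Matrix (Fin d) (Fin d) ℝ := C * A * C with hB
  have hBpsd : B.PosSemidef := by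
    have := hA.posSemidef.conjTranspose_mul_mul_same C
    rwa [hCherm] at this
  have hBherm := hBpsd.isHermitian
  -- diagonal entries of B are 1
  have hBdiag : ∀ i, B i i = 1 := by
    intro i
    have hBi : B i i = c i * A i i * c i := by
      rw [hB, Matrix.mul_diagonal, Matrix.diagonal_mul]
    rw [hBi]
    have : c i * A i i * c i = (Real.sqrt (A i i) * Real.sqrt (A i i))⁻¹ * A i i := by
      simp only [hc]; rw [mul_inv]; ring
    rw [this, Real.mul_self_sqrt (hApos i).le, inv_mul_cancel₀ (hApos i).ne']
  -- trace of B
  have htr : B.trace = (d : ℝ) := by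
    rw [Matrix.trace]
    simp only [Matrix.diag_apply, hBdiag]
    simp
  -- det B ≤ 1 via AM-GM
  have heignn : ∀ i, 0 ≤ hBherm.eigenvalues i := hBpsd.eigenvalues_nonneg
  have hdetB : B.det ≤ 1 := by
    have hdet : B.det = ∏ i, hBherm.eigenvalues i := by
      have := hBherm.det_eq_prod_eigenvalues
      simpa using this
    have hsum : ∑ i, hBherm.eigenvalues i = (d : ℝ) := by
      rw [← trace_eq_sum_eig hBherm, htr]
    have hdne : (d : ℝ) ≠ 0 := Nat.cast_ne_zero.mpr hd.ne'
    have amgm := Real.geom_mean_le_arith_mean_weighted Finset.univ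
      (fun _ => 1 / (d : ℝ)) (fun i => hBherm.eigenvalues i)
      (fun i _ => by positivity)
      (by simp [Finset.sum_const]; field_simp)
      (fun i _ => heignn i)
    rw [Real.finset_prod_rpow _ _ (fun i _ => heignn i)] at amgm
    have hrhs : ∑ i, (1 / (d : ℝ)) * hBherm.eigenvalues i = 1 := by
      rw [← Finset.mul_sum, hsum]; field_simp
    rw [hrhs] at amgm
    have hprodnn : 0 ≤ ∏ i, hBherm.eigenvalues i := Finset.prod_nonneg (fun i _ => heignn i)
    have : (∏ i, hBherm.eigenvalues i) = ((∏ i, hBherm.eigenvalues i) ^ (1 / (d:ℝ))) ^ (d : ℕ) := by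
      rw [← Real.rpow_natCast (((∏ i, hBherm.eigenvalues i) ^ (1 / (d:ℝ)))) d,
        ← Real.rpow_mul hprodnn]
      field_simp
      simp
    rw [hdet, this]
    calc ((∏ i, hBherm.eigenvalues i) ^ (1 / (d:ℝ))) ^ (d:ℕ) ≤ 1 ^ (d:ℕ) := by
          apply pow_le_pow_left₀ (by positivity) amgm
      _ = 1 := one_pow _
  -- relate det B to det A
  have hdetC : C.det = ∏ i, c i := by simp [hC]
  have hdetBA : B.det = (∏ i, c i) * A.det * (∏ i, c i) := by
    rw [hB, Matrix.det_mul, Matrix.det_mul, hdetC]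
  have hda : A.det = B.det * ∏ i, A i i := by
    have hone : (∏ i, c i) * (∏ i, c i) * (∏ i, A i i) = 1 := by
      rw [← Finset.prod_mul_distrib, ← Finset.prod_mul_distrib]
      apply Finset.prod_eq_one
      intro i _
      simp only [hc]
      rw [← mul_inv, Real.mul_self_sqrt (hApos i).le, inv_mul_cancel₀ (hApos i).ne']
    rw [hdetBA]
    linear_combination (-A.det) * hone
  rw [hda]
  calc B.det * ∏ i, A i i ≤ 1 * ∏ i, A i i := by
        apply mul_le_mul_of_nonneg_right hdetB (Finset.prod_nonneg fun i _ => (hApos i).le)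
    _ = ∏ i, A i i := one_mul _



lemma signSum {d : ℕ} (i j : Fin d) :
    ∑ s : Fin d → Bool, ((if s i then (1:ℝ) else -1) * (if s j then (1:ℝ) else -1)) =
      if i = j then (2^d : ℝ) else 0 := by
  rcases eq_or_ne i j with rfl | hij
  · simp only [if_pos rfl]
    have : ∀ s : Fin d → Bool, ((if s i then (1:ℝ) else -1) * (if s i then (1:ℝ) else -1)) = 1 := by
      intro s; cases s i <;> norm_num
    rw [Finset.sum_congr rfl (fun s _ => this s), Finset.sum_const]
    simp [Finset.card_univ]
  · rw [if_neg hij]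
    apply Finset.sum_ninvolution (fun s => Function.update s i (!(s i)))
    · intro s
      rw [Function.update_self, Function.update_of_ne hij.symm]
      cases s i <;> cases s j <;> norm_num
    · intro s _
      intro h
      have := congrFun h i
      rw [Function.update_self] at this
      cases s i <;> simp_all
    · intro s; exact Finset.mem_univ _
    · intro s
      funext k
      rcases eq_or_ne k i with rfl | hk
      · simp [Function.update_self]
      · simp [Function.update_of_ne hk]

lemma avg_bound {d : ℕ} (A : Matrix (Fin d) (Fin d) ℝ) (x : Fin d → ℝ)
    (h : ∀ s : Fin d → Bool,
      (fun i => (if s i then (1:ℝ) else -1) * x i) ⬝ᵥ A *ᵥ (fun i => (if s i then (1:ℝ) else -1) * x i) ≤ 1) :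
    x ⬝ᵥ (Matrix.diagonal fun i => A i i) *ᵥ x ≤ 1 := by
  have expand : ∀ v : Fin d → ℝ, v ⬝ᵥ A *ᵥ v = ∑ i, ∑ j, v i * A i j * v j := by
    intro v
    simp [dotProduct, Matrix.mulVec, Finset.mul_sum, mul_assoc]
  have key : ∑ s : Fin d → Bool,
      ((fun i => (if s i then (1:ℝ) else -1) * x i) ⬝ᵥ A *ᵥ (fun i => (if s i then (1:ℝ) else -1) * x i))
      = (2^d : ℝ) * ∑ i, x i * A i i * x i := by
    simp_rw [expand]
    rw [Finset.sum_comm]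
    rw [Finset.sum_congr rfl (fun i _ => Finset.sum_comm)]
    have inner : ∀ i j : Fin d, ∑ s : Fin d → Bool,
        ((if s i then (1:ℝ) else -1) * x i) * A i j * ((if s j then (1:ℝ) else -1) * x j)
        = (if i = j then (2^d : ℝ) else 0) * (x i * A i j * x j) := by
      intro i j
      rw [← signSum i j, Finset.sum_mul]
      apply Finset.sum_congr rfl
      intro s _
      ring
    rw [Finset.sum_congr rfl (fun i _ => Finset.sum_congr rfl (fun j _ => inner i j))]
    rw [Finset.mul_sum]
    apply Finset.sum_congr rfl
    intro i _
    rw [Finset.sum_eq_single i]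
    · simp
    · intro b _ hb
      rw [if_neg (Ne.symm hb), zero_mul]
    · intro h
      exact absurd (Finset.mem_univ i) h
  have hsum : ∑ s : Fin d → Bool,
      ((fun i => (if s i then (1:ℝ) else -1) * x i) ⬝ᵥ A *ᵥ (fun i => (if s i then (1:ℝ) else -1) * x i))
      ≤ (2^d : ℝ) := by
    calc _ ≤ ∑ _s : Fin d → Bool, (1:ℝ) := Finset.sum_le_sum (fun s _ => h s)
      _ = (2^d : ℝ) := by simp [Finset.card_univ]
  rw [key] at hsum
  have h2 : (0:ℝ) < 2^d := by positivity
  have hq : ∑ i, x i * A i i * x i ≤ 1 := by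
    nlinarith
  calc x ⬝ᵥ (Matrix.diagonal fun i => A i i) *ᵥ x = ∑ i, x i * A i i * x i := by
        simp [dotProduct, Matrix.mulVec_diagonal, mul_assoc]
    _ ≤ 1 := hq



-- quadratic form congruence
lemma quad_congr {d : ℕ} (M : Matrix (Fin d) (Fin d) ℝ) (x : Fin d → ℝ)
    (N : Matrix (Fin d) (Fin d) ℝ) :
    (M *ᵥ x) ⬝ᵥ (N *ᵥ (M *ᵥ x)) = x ⬝ᵥ ((Mᵀ * N * M) *ᵥ x) := by
  simp only [Matrix.dotProduct_mulVec, ← Matrix.vecMul_vecMul]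
  rw [show (M *ᵥ x) = x ᵥ* Mᵀ from (Matrix.vecMul_transpose M x).symm]

lemma sqrt_transpose {d : ℕ} {P : Matrix (Fin d) (Fin d) ℝ} (hP : P.PosSemidef) :
    hP.sqrtᵀ = hP.sqrt := by
  have := hP.posSemidef_sqrt.isHermitian
  rwa [Matrix.IsHermitian, Matrix.conjTranspose_eq_transpose_of_trivial] at this

lemma sqrt_det_pos {d : ℕ} {P : Matrix (Fin d) (Fin d) ℝ} (hP : P.PosDef) :
    0 < hP.posSemidef.sqrt.det := by
  have hsq : hP.posSemidef.sqrt.det * hP.posSemidef.sqrt.det = P.det := by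
    rw [← Matrix.det_mul, hP.posSemidef.sqrt_mul_self]
  have hσ : 0 ≤ hP.posSemidef.sqrt.det := by
    -- det of posSemidef is nonneg: product of nonneg eigenvalues
    have h := hP.posSemidef.posSemidef_sqrt
    rw [h.isHermitian.det_eq_prod_eigenvalues]
    exact Finset.prod_nonneg fun i _ => h.eigenvalues_nonneg i
  rcases lt_or_eq_of_le hσ with h | h
  · exact h
  · exfalso
    have := hP.det_pos
    rw [← hsq, ← h] at this
    simp at this
-- transform identity: (sqrtQ⁻¹ * sqrtP)ᵀ * Q * (sqrtQ⁻¹ * sqrtP) = P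
lemma transform_eq {d : ℕ} {P Q : Matrix (Fin d) (Fin d) ℝ} (hP : P.PosDef) (hQ : Q.PosDef) :
    (hQ.posSemidef.sqrt⁻¹ * hP.posSemidef.sqrt)ᵀ * Q * (hQ.posSemidef.sqrt⁻¹ * hP.posSemidef.sqrt)
      = P := by
  set sP := hP.posSemidef.sqrt
  set sQ := hQ.posSemidef.sqrt
  have hsQdet : IsUnit sQ.det := (sqrt_det_pos hQ).ne'.isUnit
  have h1 : sQ * sQ⁻¹ = 1 := Matrix.mul_nonsing_inv _ hsQdet
  have h2 : sQ⁻¹ * sQ = 1 := Matrix.nonsing_inv_mul _ hsQdet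
  rw [Matrix.transpose_mul, sqrt_transpose hP.posSemidef, Matrix.transpose_nonsing_inv,
    sqrt_transpose hQ.posSemidef]
  have hQeq : Q = sQ * sQ := (hQ.posSemidef.sqrt_mul_self).symm
  calc sP * sQ⁻¹ * Q * (sQ⁻¹ * sP) = sP * ((sQ⁻¹ * sQ) * (sQ * sQ⁻¹)) * sP := by
        rw [hQeq]; noncomm_ring
    _ = sP * sP := by rw [h1, h2]; noncomm_ring
    _ = P := hP.posSemidef.sqrt_mul_self


lemma quad_sandwich {d : ℕ} {P Q : Matrix (Fin d) (Fin d) ℝ} (hP : P.PosDef) (hQ : Q.PosDef)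
    (x : Fin d → ℝ) :
    ((hQ.posSemidef.sqrt⁻¹ * hP.posSemidef.sqrt) *ᵥ x) ⬝ᵥ
      (Q *ᵥ ((hQ.posSemidef.sqrt⁻¹ * hP.posSemidef.sqrt) *ᵥ x)) = x ⬝ᵥ (P *ᵥ x) := by
  have h := quad_congr (hQ.posSemidef.sqrt⁻¹ * hP.posSemidef.sqrt) x Q
  rwa [transform_eq hP hQ] at h

lemma ellipsoid_image {d : ℕ} {P Q : Matrix (Fin d) (Fin d) ℝ} (hP : P.PosDef) (hQ : Q.PosDef) :
    (fun x => (hQ.posSemidef.sqrt⁻¹ * hP.posSemidef.sqrt) *ᵥ x) '' {x : Fin d → ℝ | x ⬝ᵥ P *ᵥ x ≤ 1}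
      = {x : Fin d → ℝ | x ⬝ᵥ Q *ᵥ x ≤ 1} := by
  ext y
  constructor
  · rintro ⟨x, hx, rfl⟩
    simp only [Set.mem_setOf_eq] at hx ⊢
    rw [quad_sandwich hP hQ x]
    exact hx
  · intro hy
    simp only [Set.mem_setOf_eq] at hy
    refine ⟨(hP.posSemidef.sqrt⁻¹ * hQ.posSemidef.sqrt) *ᵥ y, ?_, ?_⟩
    · simp only [Set.mem_setOf_eq]
      rw [quad_sandwich hQ hP y]
      exact hy
    · show (hQ.posSemidef.sqrt⁻¹ * hP.posSemidef.sqrt) *ᵥ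
        ((hP.posSemidef.sqrt⁻¹ * hQ.posSemidef.sqrt) *ᵥ y) = y
      have h1 : hP.posSemidef.sqrt * hP.posSemidef.sqrt⁻¹ = 1 :=
        Matrix.mul_nonsing_inv _ (sqrt_det_pos hP).ne'.isUnit
      have h2 : hQ.posSemidef.sqrt⁻¹ * hQ.posSemidef.sqrt = 1 :=
        Matrix.nonsing_inv_mul _ (sqrt_det_pos hQ).ne'.isUnit
      have hTT' : (hQ.posSemidef.sqrt⁻¹ * hP.posSemidef.sqrt) *
          (hP.posSemidef.sqrt⁻¹ * hQ.posSemidef.sqrt) = 1 := by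
        calc hQ.posSemidef.sqrt⁻¹ * hP.posSemidef.sqrt *
              (hP.posSemidef.sqrt⁻¹ * hQ.posSemidef.sqrt)
            = hQ.posSemidef.sqrt⁻¹ * (hP.posSemidef.sqrt * hP.posSemidef.sqrt⁻¹) *
              hQ.posSemidef.sqrt := by noncomm_ring
          _ = 1 := by rw [h1, mul_one, h2]
      rw [Matrix.mulVec_mulVec, hTT', Matrix.one_mulVec]

end AuxAxisAligned

/-- An axis-aligned convex set contained in the ellipsoid `E(A)` is also
contained in the axis-aligned ellipsoid `E(Diag(diag A))`, whose volume is at most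
that of `E(A)`. -/
theorem axis_aligned_ellipsoid {d : ℕ} (X : Set (Fin d → ℝ)) (hX : Convex ℝ X)
    (hsym : ∀ x ∈ X, ∀ s : Fin d → Bool, (fun i => (if s i then (1 : ℝ) else -1) * x i) ∈ X)
    (A : Matrix (Fin d) (Fin d) ℝ) (hA : A.PosDef)
    (hXA : X ⊆ {x : Fin d → ℝ | x ⬝ᵥ A *ᵥ x ≤ 1}) :
    X ⊆ {x : Fin d → ℝ | x ⬝ᵥ (Matrix.diagonal fun i => A i i) *ᵥ x ≤ 1} ∧
    MeasureTheory.volume {x : Fin d → ℝ | x ⬝ᵥ (Matrix.diagonal fun i => A i i) *ᵥ x ≤ 1}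
      ≤ MeasureTheory.volume {x : Fin d → ℝ | x ⬝ᵥ A *ᵥ x ≤ 1} := by
  have hD : (Matrix.diagonal fun i => A i i).PosDef :=
    Matrix.PosDef.diagonal (fun i => diag_pos' hA i)
  constructor
  · intro x hx
    simp only [Set.mem_setOf_eq]
    exact avg_bound A x (fun s => hXA (hsym x hx s))
  · -- volume comparison
    set T := hD.posSemidef.sqrt⁻¹ * hA.posSemidef.sqrt with hT
    have himg := ellipsoid_image hA hD
    have haar := MeasureTheory.Measure.addHaar_image_linearMap
      (MeasureTheory.volume : MeasureTheory.Measure (Fin d → ℝ)) (Matrix.toLin' T)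
      {x : Fin d → ℝ | x ⬝ᵥ A *ᵥ x ≤ 1}
    have hco : ⇑(Matrix.toLin' T) = fun x => T *ᵥ x := by
      funext x; exact Matrix.toLin'_apply T x
    rw [hco, himg, LinearMap.det_toLin'] at haar
    -- bound the determinant
    have ha : 0 < hA.posSemidef.sqrt.det := sqrt_det_pos hA
    have hb : 0 < hD.posSemidef.sqrt.det := sqrt_det_pos hD
    have ha2 : hA.posSemidef.sqrt.det * hA.posSemidef.sqrt.det = A.det := by
      rw [← Matrix.det_mul, hA.posSemidef.sqrt_mul_self]
    have hb2 : hD.posSemidef.sqrt.det * hD.posSemidef.sqrt.det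
        = (Matrix.diagonal fun i => A i i).det := by
      rw [← Matrix.det_mul, hD.posSemidef.sqrt_mul_self]
    have hdet_le : A.det ≤ (Matrix.diagonal fun i => A i i).det := by
      rw [Matrix.det_diagonal]
      exact hadamard hA
    have hab : hA.posSemidef.sqrt.det ≤ hD.posSemidef.sqrt.det := by
      nlinarith
    have hTdet : |T.det| ≤ 1 := by
      rw [hT, Matrix.det_mul, Matrix.det_nonsing_inv, Ring.inverse_eq_inv]
      rw [abs_of_nonneg (by positivity)]
      rw [inv_mul_le_iff₀ hb, mul_one]
      exact hab
    rw [haar]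
    calc ENNReal.ofReal |T.det| * MeasureTheory.volume {x : Fin d → ℝ | x ⬝ᵥ A *ᵥ x ≤ 1}
        ≤ 1 * MeasureTheory.volume {x : Fin d → ℝ | x ⬝ᵥ A *ᵥ x ≤ 1} := by
          exact mul_le_mul_left (ENNReal.ofReal_le_one.mpr hTdet) _
      _ = _ := one_mul _
end
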